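/- Let d₁, …, d_k be pairwise distinct, pairwise coprime, squarefree integers, each different from 0 and 1, let K = ℚ(√d₁, …, √d_k), and let p be an odd prime not dividing any dᵢ. Then for every maximal ideal 𝔓 of the ring of integers O_K of K lying over p, the decomposition group of 𝔓 (the stabilizer of 𝔓 under the action of Gal(K/ℚ)) has order at most 2. -/

import Mathlib

open NumberField

open Polynomial IntermediateField


/-- The subfield of elements fixed by a field automorphism. -/
def fixedPts {F : Type*} [Field F] (φ : F ≃+* F) : Subfield F where
  carrier := {x | φ x = x}
  zero_mem' := map_zero φ
  one_mem' := map_one φ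
  add_mem' := fun {a b} ha hb => by
    simp only [Set.mem_setOf_eq] at *
    rw [map_add, ha, hb]
  mul_mem' := fun {a b} ha hb => by
    simp only [Set.mem_setOf_eq] at *
    rw [map_mul, ha, hb]
  neg_mem' := fun {a} ha => by
    simp only [Set.mem_setOf_eq] at *
    rw [map_neg, ha]
  inv_mem' := fun a ha => by
    simp only [Set.mem_setOf_eq] at *
    rw [map_inv₀, ha]

lemma mem_fixedPts {F : Type*} [Field F] (φ : F ≃+* F) (x : F) :
    x ∈ fixedPts φ ↔ φ x = x := Iff.rfl

lemma fixed_eq_pow_card {F : Type*} [Field F] [Fintype F] (φ : F ≃+* F) :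
    ∀ x : F, φ x = x → x ^ Nat.card (fixedPts φ) = x := by
  classical
  letI : Fintype (fixedPts φ) := Fintype.ofFinite _
  intro x hx
  rw [Nat.card_eq_fintype_card]
  have h := FiniteField.pow_card (⟨x, hx⟩ : fixedPts φ)
  have := congrArg (Subtype.val) h
  push_cast at this
  simpa using this

lemma decomp {F : Type*} [Field F] (h2 : (2 : F) ≠ 0)
    (φ : F ≃+* F) (hφ2 : ∀ x, φ (φ x) = x) {v : F} (hv : φ v = -v) (hvne : v ≠ 0) :
    ∀ y : F, ∃ a b : F, φ a = a ∧ φ b = b ∧ y = a + b * v := by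
  intro y
  refine ⟨(y + φ y) / 2, (y - φ y) / (2 * v), ?_, ?_, ?_⟩
  · rw [map_div₀, map_add, hφ2, map_ofNat, add_comm]
  · rw [map_div₀, map_sub, hφ2, map_mul, map_ofNat, hv]
    rw [mul_neg, div_neg, ← neg_div, neg_sub]
  · field_simp
    ring

/-- card F = card (fixedPts φ)^2 for a nontrivial involution. -/
lemma card_eq_sq {F : Type*} [Field F] [Fintype F] (h2 : (2 : F) ≠ 0)
    (φ : F ≃+* F) (hφ2 : ∀ x, φ (φ x) = x) {v : F} (hv : φ v = -v) (hvne : v ≠ 0) :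
    Fintype.card F = Nat.card (fixedPts φ) ^ 2 := by
  classical
  letI : Fintype (fixedPts φ) := Fintype.ofFinite _
  rw [Nat.card_eq_fintype_card]
  have hdec : ∀ y : F, ∃ a b : fixedPts φ, y = (a : F) + (b : F) * v := by
    intro y
    obtain ⟨a, b, ha, hb, hy⟩ := decomp h2 φ hφ2 hv hvne y
    exact ⟨⟨a, ha⟩, ⟨b, hb⟩, hy⟩
  have hinj : Function.Injective (fun ab : fixedPts φ × fixedPts φ =>
      (ab.1 : F) + (ab.2 : F) * v) := by
    rintro ⟨a, b⟩ ⟨a', b'⟩ hab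
    simp only at hab
    have h2' : (a : F) - a' = ((b' : F) - b) * v := by linear_combination hab
    have h3 : φ ((a : F) - a') = (a : F) - a' := by rw [map_sub, a.2, a'.2]
    have h4 : φ (((b' : F) - b) * v) = -(((b' : F) - b) * v) := by
      rw [map_mul, map_sub, b.2, b'.2, hv, mul_neg]
    rw [h2', h4] at h3
    have h5 : (2 : F) * (((b' : F) - b) * v) = 0 := by linear_combination -h3
    have h6 : ((b' : F) - b) * v = 0 := by
      rcases mul_eq_zero.mp h5 with h | h
      · exact absurd h h2
      · exact h
    rcases mul_eq_zero.mp h6 with h | h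
    · have hb : (b : F) = b' := by linear_combination -h
      have ha : (a : F) = a' := by linear_combination hab - v * hb
      exact Prod.ext (Subtype.ext ha) (Subtype.ext hb)
    · exact absurd h hvne
  have hsurj : Function.Surjective (fun ab : fixedPts φ × fixedPts φ =>
      (ab.1 : F) + (ab.2 : F) * v) := by
    intro y; obtain ⟨a, b, hy⟩ := hdec y; exact ⟨⟨a, b⟩, hy.symm⟩
  have := Fintype.card_of_bijective ⟨hinj, hsurj⟩
  rw [Fintype.card_prod] at this
  rw [← this, sq]

lemma fixed_set_eq {F : Type*} [Field F] [Fintype F] (φ : F ≃+* F) :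
    {x : F | φ x = x} = {x : F | x ^ Nat.card (fixedPts φ) = x} := by
  classical
  letI : Fintype (fixedPts φ) := Fintype.ofFinite _
  set q₀ := Nat.card (fixedPts φ) with hq₀
  have hq₀2 : 2 ≤ q₀ := by
    rw [hq₀, Nat.card_eq_fintype_card]; exact Fintype.one_lt_card
  set P : Polynomial F := X ^ q₀ - X with hP
  have hPne : P ≠ 0 := by
    intro h
    have : P.coeff q₀ = 1 := by
      rw [hP, coeff_sub, coeff_X_pow, if_pos rfl, coeff_X, if_neg (by omega), sub_zero]
    rw [h] at this
    simp at this
  have hroot : ∀ x : F, x ^ q₀ = x ↔ x ∈ P.roots := by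
    intro x
    rw [mem_roots hPne]
    constructor
    · intro h; simp [hP, IsRoot, h]
    · intro h; simp only [hP, IsRoot, eval_sub, eval_pow, eval_X] at h
      exact sub_eq_zero.mp h
  apply Set.eq_of_subset_of_ncard_le
  · intro x hx
    exact fixed_eq_pow_card φ x hx
  · have hsub : {x : F | x ^ q₀ = x} ⊆ ↑P.roots.toFinset := by
      intro x hx
      simp only [Multiset.mem_toFinset, Finset.coe_sort_coe, Finset.mem_coe]
      exact (hroot x).mp hx
    have h1 : ({x : F | x ^ q₀ = x}).ncard ≤ P.roots.toFinset.card :=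
      le_trans (Set.ncard_le_ncard hsub (Set.toFinite _)) (le_of_eq (Set.ncard_coe_finset _))
    have h2 : P.roots.toFinset.card ≤ q₀ := by
      refine le_trans (Multiset.toFinset_card_le _) (le_trans (P.card_roots') ?_)
      refine le_trans (natDegree_sub_le _ _) ?_
      simp only [natDegree_X_pow, natDegree_X]
      omega
    have h3 : ({x : F | φ x = x}).ncard = q₀ := by
      rw [hq₀, ← Nat.card_coe_set_eq]
      rfl
    omega
  · exact Set.toFinite _

/-- A finite field of odd characteristic has at most one nontrivial involution. -/
lemma invol_unique {F : Type*} [Field F] [Fintype F] (h2 : (2 : F) ≠ 0)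
    (φ ψ : F ≃+* F) (hφ2 : ∀ x, φ (φ x) = x) (hψ2 : ∀ x, ψ (ψ x) = x)
    (hφ : ∃ x, φ x ≠ x) (hψ : ∃ x, ψ x ≠ x) : φ = ψ := by
  classical
  obtain ⟨x₀, hx₀⟩ := hφ
  set v : F := x₀ - φ x₀ with hvdef
  have hv : φ v = -v := by rw [hvdef, map_sub, hφ2, neg_sub]
  have hvne : v ≠ 0 := by
    rw [hvdef, sub_ne_zero]; exact fun h => hx₀ h.symm
  -- the analogous data for ψ
  obtain ⟨y₀, hy₀⟩ := hψ
  set w : F := y₀ - ψ y₀ with hwdef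
  have hw : ψ w = -w := by rw [hwdef, map_sub, hψ2, neg_sub]
  have hwne : w ≠ 0 := by
    rw [hwdef, sub_ne_zero]; exact fun h => hy₀ h.symm
  -- fixed sets coincide
  have hcard : Nat.card (fixedPts φ) = Nat.card (fixedPts ψ) := by
    have h1 := card_eq_sq h2 φ hφ2 hv hvne
    have h2' := card_eq_sq h2 ψ hψ2 hw hwne
    have := h1.symm.trans h2'
    exact Nat.pow_left_injective two_ne_zero this
  have hfix : ∀ x : F, φ x = x ↔ ψ x = x := by
    intro x
    have e1 := fixed_set_eq φ
    have e2 := fixed_set_eq ψ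
    rw [hcard] at e1
    constructor
    · intro h
      have : x ∈ {x : F | ψ x = x} := by rw [e2, ← e1]; exact h
      exact this
    · intro h
      have : x ∈ {x : F | φ x = x} := by rw [e1, ← e2]; exact h
      exact this
  -- ψ v = -v
  have hv2 : φ (v * v) = v * v := by rw [map_mul, hv]; ring
  have hfv : ψ (v * v) = v * v := (hfix _).mp hv2
  have hψv2 : ψ v * ψ v = v * v := by rw [← map_mul, hfv]
  rcases mul_self_eq_mul_self_iff.mp hψv2 with hψv | hψv
  · exfalso
    apply hy₀
    obtain ⟨a, b, ha, hb, hy⟩ := decomp h2 φ hφ2 hv hvne y₀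
    have ha' := (hfix a).mp ha
    have hb' := (hfix b).mp hb
    calc ψ y₀ = ψ a + ψ b * ψ v := by rw [hy, map_add, map_mul]
    _ = a + b * v := by rw [ha', hb', hψv]
    _ = y₀ := hy.symm
  · ext y
    obtain ⟨a, b, ha, hb, hy⟩ := decomp h2 φ hφ2 hv hvne y
    have ha' := (hfix a).mp ha
    have hb' := (hfix b).mp hb
    calc φ y = φ a + φ b * φ v := by rw [hy, map_add, map_mul]
    _ = a + b * -v := by rw [ha, hb, hv]
    _ = ψ a + ψ b * ψ v := by rw [ha', hb', hψv]
    _ = ψ y := by rw [← map_mul, ← map_add, ← hy]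

set_option maxHeartbeats 1000000 in
set_option synthInstance.maxHeartbeats 400000 in
/-- Let `d₁, …, d_k` be pairwise distinct, pairwise coprime, squarefree integers, each
different from `0` and `1`, let `K = ℚ(√d₁, …, √d_k) ⊆ ℂ`, and let `p` be an odd prime
dividing none of the `dᵢ`.  Then for every maximal ideal `𝔓` of the ring of integers of
`K` lying over `p`, the decomposition group of `𝔓`, i.e. the stabilizer of `𝔓` under the
action of `Gal(K/ℚ)`, has order at most `2`. -/
theorem polyquadratic_decomposition_group_card_le_two
    (k : ℕ) (d : Fin k → ℤ)
    (hdist : Function.Injective d)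
    (hcop : ∀ i j, i ≠ j → IsCoprime (d i) (d j))
    (hsf : ∀ i, Squarefree (d i))
    (h0 : ∀ i, d i ≠ 0) (h1 : ∀ i, d i ≠ 1)
    (s : Fin k → ℂ) (hs : ∀ i, s i ^ 2 = (d i : ℂ))
    (K : IntermediateField ℚ ℂ) (hK : K = IntermediateField.adjoin ℚ (Set.range s))
    (p : ℕ) (hp : p.Prime) (hp2 : p ≠ 2)
    (hpd : ∀ i, ¬ (p : ℤ) ∣ d i)
    (𝔓 : Ideal (𝓞 K)) (hmax : 𝔓.IsMaximal) (hover : (p : 𝓞 K) ∈ 𝔓) :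
    Nat.card {σ : K ≃ₐ[ℚ] K |
        Ideal.map (RingOfIntegers.mapRingHom (σ : K ≃ₐ[ℚ] K)) 𝔓 = 𝔓} ≤ 2 := by
  classical
  haveI := hmax
  -- integrality of the square roots
  have hsint : ∀ i, IsIntegral ℤ (s i) := by
    intro i
    refine ⟨X ^ 2 - C (d i), monic_X_pow_sub_C _ two_ne_zero, ?_⟩
    rw [eval₂_sub, eval₂_pow, eval₂_X, eval₂_C, hs i]; simp
  have hmem : ∀ i, s i ∈ K := by
    rw [hK]; exact fun i => IntermediateField.subset_adjoin _ _ ⟨i, rfl⟩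
  set g : Fin k → K := fun i => ⟨s i, hmem i⟩ with hgdef
  -- finite dimensionality and number field structure
  haveI : CharZero K := charZero_of_injective_algebraMap (algebraMap ℚ K).injective
  haveI : FiniteDimensional ℚ K := by
    rw [hK]
    haveI : Finite (Set.range s) := Set.finite_range s
    exact IntermediateField.finiteDimensional_adjoin
      (fun x hx => by obtain ⟨i, rfl⟩ := hx; exact (hsint i).tower_top)
  haveI : NumberField K := ⟨⟩
  -- the squares of the generators
  have hg2 : ∀ i, (g i) ^ 2 = algebraMap ℚ K ((d i : ℚ)) := by
    intro i
    apply Subtype.ext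
    push_cast [hgdef]
    exact hs i
  have hgint : ∀ i, IsIntegral ℤ (g i : K) := by
    intro i
    refine ⟨X ^ 2 - C (d i), monic_X_pow_sub_C _ two_ne_zero, ?_⟩
    rw [eval₂_sub, eval₂_pow, eval₂_X, eval₂_C]
    rw [show (algebraMap ℤ K) (d i) = algebraMap ℚ K ((d i : ℚ)) from
      (map_intCast (algebraMap ℚ K) (d i)).symm, ← hg2 i, sub_self]
  set xi : Fin k → 𝓞 K := fun i => ⟨g i, hgint i⟩ with hxidef
  -- all automorphisms send g i to ± g i
  have hval : ∀ (σ : K ≃ₐ[ℚ] K) i, σ (g i) = g i ∨ σ (g i) = -(g i) := by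
    intro σ i
    have h1 : (σ (g i)) ^ 2 = (g i) ^ 2 := by
      rw [← map_pow, hg2 i, AlgEquiv.commutes]
    rw [sq, sq] at h1
    exact mul_self_eq_mul_self_iff.mp h1
  -- extensionality on the generators
  have hext : ∀ σ τ : K ≃ₐ[ℚ] K, (∀ i, σ (g i) = τ (g i)) → σ = τ := by
    intro σ τ h
    have htop : Algebra.adjoin ℚ (Set.range g) = ⊤ := by
      have h1 : IntermediateField.adjoin ℚ (Set.range g) = ⊤ := by
        apply IntermediateField.map_injective K.val
        erw [IntermediateField.adjoin_map]
        have himg : K.val '' Set.range g = Set.range s := by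
          ext x
          constructor
          · rintro ⟨y, ⟨i, rfl⟩, rfl⟩; exact ⟨i, rfl⟩
          · rintro ⟨i, rfl⟩; exact ⟨g i, ⟨i, rfl⟩, rfl⟩
        rw [himg, ← hK]
        apply SetLike.coe_injective
        erw [IntermediateField.coe_map]
        simp [Set.image_univ, Subtype.range_coe]
        ext x
        exact ⟨fun hx => ⟨⟨x, hx⟩, trivial, rfl⟩, fun ⟨y, _, hy⟩ => hy ▸ y.2⟩
      have h2 : (IntermediateField.adjoin ℚ (Set.range g)).toSubalgebra
          = Algebra.adjoin ℚ (Set.range g) := by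
        apply IntermediateField.adjoin_toSubalgebra_of_isAlgebraic
        rintro x ⟨i, rfl⟩
        exact ((hgint i).tower_top (A := ℚ)).isAlgebraic
      rw [h1, IntermediateField.top_toSubalgebra] at h2
      exact h2.symm
    apply AlgEquiv.ext
    intro x
    have hx : x ∈ Algebra.adjoin ℚ (Set.range g) := htop ▸ Algebra.mem_top
    induction hx using Algebra.adjoin_induction with
    | mem x hx => obtain ⟨i, rfl⟩ := hx; exact h i
    | algebraMap r => rw [AlgEquiv.commutes, AlgEquiv.commutes]
    | add x y hx hy ihx ihy => rw [map_add, map_add, ihx, ihy]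
    | mul x y hx hy ihx ihy => rw [map_mul, map_mul, ihx, ihy]
  -- every automorphism is an involution
  have hexp : ∀ σ : K ≃ₐ[ℚ] K, ∀ x : K, σ (σ x) = x := by
    intro σ
    have : σ * σ = 1 := by
      apply hext
      intro i
      rcases hval σ i with h | h
      · rw [AlgEquiv.mul_apply, h, h, AlgEquiv.one_apply]
      · rw [AlgEquiv.mul_apply, h, map_neg, h, neg_neg, AlgEquiv.one_apply]
    intro x
    have := congrArg (fun e : K ≃ₐ[ℚ] K => e x) this
    simpa using this
  -- membership facts about 𝔓
  have hone : (1 : 𝓞 K) ∉ 𝔓 := fun h => hmax.ne_top ((Ideal.eq_top_iff_one _).mpr h)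
  have hcop' : ∀ n : ℤ, ¬ (p : ℤ) ∣ n → ((n : 𝓞 K) ∈ 𝔓) → False := by
    intro n hdvd hmem'
    have hcn : IsCoprime ((p : ℕ) : ℤ) n := (Nat.prime_iff_prime_int.mp hp).coprime_iff_not_dvd.mpr hdvd
    obtain ⟨a, b, hab⟩ := hcn
    apply hone
    have h1m : ((1 : ℤ) : 𝓞 K) ∈ 𝔓 := by
      rw [← hab, Int.cast_add, Int.cast_mul, Int.cast_mul]
      refine Ideal.add_mem _ (Ideal.mul_mem_left _ _ ?_) (Ideal.mul_mem_left _ _ hmem')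
      rw [Int.cast_natCast]; exact hover
    rwa [Int.cast_one] at h1m
  have hnd4 : ∀ i, ¬ (p : ℤ) ∣ (4 * d i) := by
    intro i h
    rcases (Nat.prime_iff_prime_int.mp hp).dvd_mul.mp h with h4 | hd
    · have : p ∣ 4 := by exact_mod_cast h4
      have hp4 : p ∣ 2 := hp.dvd_of_dvd_pow (n := 2) (by norm_num [this])
      exact hp2 ((Nat.prime_dvd_prime_iff_eq hp Nat.prime_two).mp hp4)
    · exact hpd i hd
  have htwo : ∀ i, (2 * xi i) ∉ 𝔓 := by
    intro i hmem'
    apply hcop' (4 * d i) (hnd4 i)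
    have he : ((4 * d i : ℤ) : 𝓞 K) = (2 * xi i) * (2 * xi i) := by
      apply NumberField.RingOfIntegers.ext
      rw [RingOfIntegers.coe_eq_algebraMap, RingOfIntegers.coe_eq_algebraMap,
        map_intCast, map_mul, map_mul, map_ofNat]
      have hxig : algebraMap (𝓞 K) K (xi i) = g i := rfl
      rw [hxig, Int.cast_mul,
        show ((d i : ℤ) : K) = algebraMap ℚ K ((d i : ℚ)) from
          (map_intCast (algebraMap ℚ K) (d i)).symm, ← hg2 i]
      push_cast
      ring
    rw [he]
    exact Ideal.mul_mem_left _ _ hmem'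
  -- separation: congruent automorphisms mod 𝔓 are equal
  have hsep : ∀ σ τ : K ≃ₐ[ℚ] K,
      (∀ x : 𝓞 K, Ideal.Quotient.mk 𝔓 (RingOfIntegers.mapRingHom σ x)
        = Ideal.Quotient.mk 𝔓 (RingOfIntegers.mapRingHom τ x)) → σ = τ := by
    intro σ τ h
    apply hext
    intro i
    by_contra hne
    have hmem' : RingOfIntegers.mapRingHom σ (xi i) - RingOfIntegers.mapRingHom τ (xi i) ∈ 𝔓 :=
      (Ideal.Quotient.eq).mp (h (xi i))
    have hcoeσ : ((RingOfIntegers.mapRingHom σ (xi i) : 𝓞 K) : K) = σ (g i) := rfl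
    have hcoeτ : ((RingOfIntegers.mapRingHom τ (xi i) : 𝓞 K) : K) = τ (g i) := rfl
    rcases hval σ i with h1 | h1 <;> rcases hval τ i with h2 | h2
    · exact hne (h1.trans h2.symm)
    · apply htwo i
      have he : (2 * xi i : 𝓞 K)
          = RingOfIntegers.mapRingHom σ (xi i) - RingOfIntegers.mapRingHom τ (xi i) := by
        apply NumberField.RingOfIntegers.ext
        rw [RingOfIntegers.coe_eq_algebraMap, RingOfIntegers.coe_eq_algebraMap,
          map_sub, map_mul, map_ofNat]
        rw [show algebraMap (𝓞 K) K (RingOfIntegers.mapRingHom σ (xi i)) = σ (g i) from rfl,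
          show algebraMap (𝓞 K) K (RingOfIntegers.mapRingHom τ (xi i)) = τ (g i) from rfl,
          show algebraMap (𝓞 K) K (xi i) = g i from rfl, h1, h2]
        ring
      rw [he]; exact hmem'
    · apply htwo i
      have he : (2 * xi i : 𝓞 K)
          = -(RingOfIntegers.mapRingHom σ (xi i) - RingOfIntegers.mapRingHom τ (xi i)) := by
        apply NumberField.RingOfIntegers.ext
        rw [RingOfIntegers.coe_eq_algebraMap, RingOfIntegers.coe_eq_algebraMap,
          map_neg, map_sub, map_mul, map_ofNat]
        rw [show algebraMap (𝓞 K) K (RingOfIntegers.mapRingHom σ (xi i)) = σ (g i) from rfl,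
          show algebraMap (𝓞 K) K (RingOfIntegers.mapRingHom τ (xi i)) = τ (g i) from rfl,
          show algebraMap (𝓞 K) K (xi i) = g i from rfl, h1, h2]
        ring
      rw [he]; exact neg_mem hmem'
    · exact hne (h1.trans h2.symm)
  -- the residue field
  have hbot : 𝔓 ≠ ⊥ := by
    intro h
    rw [h, Ideal.mem_bot] at hover
    have hcast : ((p : 𝓞 K) : K) = 0 := by rw [hover]; simp
    rw [RingOfIntegers.coe_eq_algebraMap, map_natCast] at hcast
    exact (Nat.cast_ne_zero (R := K)).mpr hp.ne_zero hcast
  letI : Field (𝓞 K ⧸ 𝔓) := Ideal.Quotient.field 𝔓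
  letI : Fintype (𝓞 K ⧸ 𝔓) := @Fintype.ofFinite _ (Ideal.finiteQuotientOfFreeOfNeBot 𝔓 hbot)
  have h2F : (2 : 𝓞 K ⧸ 𝔓) ≠ 0 := by
    intro h
    apply hcop' 2 (by
      intro hdvd
      have : p ∣ 2 := by exact_mod_cast hdvd
      exact hp2 ((Nat.prime_dvd_prime_iff_eq hp Nat.prime_two).mp this))
    have h2e : ((2 : ℤ) : 𝓞 K) = (2 : 𝓞 K) := by norm_num
    rw [h2e, ← Ideal.Quotient.eq_zero_iff_mem, map_ofNat]
    exact h
  -- induced automorphism of the residue field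
  have hresid : ∀ σ : K ≃ₐ[ℚ] K, Ideal.map (RingOfIntegers.mapRingHom (σ : K ≃ₐ[ℚ] K)) 𝔓 = 𝔓 →
      ∃ φ : (𝓞 K ⧸ 𝔓) ≃+* (𝓞 K ⧸ 𝔓), ∀ x : 𝓞 K,
        φ (Ideal.Quotient.mk 𝔓 x) = Ideal.Quotient.mk 𝔓 (RingOfIntegers.mapRingHom σ x) := by
    intro σ hσ
    have hco : ((RingOfIntegers.mapRingEquiv σ : (𝓞 K) ≃+* (𝓞 K)) : (𝓞 K) →+* (𝓞 K))
        = RingOfIntegers.mapRingHom σ := rfl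
    refine ⟨Ideal.quotientEquiv 𝔓 𝔓 (RingOfIntegers.mapRingEquiv σ) (by rw [hco]; exact hσ.symm),
      fun x => ?_⟩
    exact Ideal.quotientEquiv_mk 𝔓 𝔓 _ _ x
  -- induced automorphisms are involutions
  have hinvol : ∀ (σ : K ≃ₐ[ℚ] K) (φ : (𝓞 K ⧸ 𝔓) ≃+* (𝓞 K ⧸ 𝔓)),
      (∀ x : 𝓞 K, φ (Ideal.Quotient.mk 𝔓 x) = Ideal.Quotient.mk 𝔓 (RingOfIntegers.mapRingHom σ x))
      → ∀ y, φ (φ y) = y := by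
    intro σ φ hpt y
    obtain ⟨x, rfl⟩ := Ideal.Quotient.mk_surjective y
    rw [hpt, hpt]
    congr 1
    apply NumberField.RingOfIntegers.ext
    exact hexp σ (x : K)
  -- induced automorphisms of nontrivial elements are nontrivial
  have hnontriv : ∀ (σ : K ≃ₐ[ℚ] K) (φ : (𝓞 K ⧸ 𝔓) ≃+* (𝓞 K ⧸ 𝔓)),
      (∀ x : 𝓞 K, φ (Ideal.Quotient.mk 𝔓 x) = Ideal.Quotient.mk 𝔓 (RingOfIntegers.mapRingHom σ x))
      → σ ≠ 1 → ∃ y, φ y ≠ y := by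
    intro σ φ hpt hne
    by_contra hfix
    push_neg at hfix
    apply hne
    apply hsep σ 1
    intro x
    have h1 : RingOfIntegers.mapRingHom (1 : K ≃ₐ[ℚ] K) x = x := rfl
    rw [h1, ← hpt x, hfix]
  -- conclusion
  by_cases hall : ∀ σ : K ≃ₐ[ℚ] K,
      Ideal.map (RingOfIntegers.mapRingHom (σ : K ≃ₐ[ℚ] K)) 𝔓 = 𝔓 → σ = 1
  · have hsub : {σ : K ≃ₐ[ℚ] K | Ideal.map (RingOfIntegers.mapRingHom (σ : K ≃ₐ[ℚ] K)) 𝔓 = 𝔓}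
        ⊆ {1} := fun σ hσ => hall σ hσ
    calc Nat.card {σ : K ≃ₐ[ℚ] K |
        Ideal.map (RingOfIntegers.mapRingHom (σ : K ≃ₐ[ℚ] K)) 𝔓 = 𝔓}
        = ({σ : K ≃ₐ[ℚ] K |
          Ideal.map (RingOfIntegers.mapRingHom (σ : K ≃ₐ[ℚ] K)) 𝔓 = 𝔓} : Set _).ncard :=
          Nat.card_coe_set_eq _
      _ ≤ ({1} : Set (K ≃ₐ[ℚ] K)).ncard := Set.ncard_le_ncard hsub (Set.finite_singleton _)
      _ = 1 := Set.ncard_singleton _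
      _ ≤ 2 := one_le_two
  · push_neg at hall
    obtain ⟨σ₀, hσ₀S, hσ₀⟩ := hall
    have key : ∀ τ : K ≃ₐ[ℚ] K, Ideal.map (RingOfIntegers.mapRingHom (τ : K ≃ₐ[ℚ] K)) 𝔓 = 𝔓 →
        τ ≠ 1 → τ = σ₀ := by
      intro τ hτS hτ
      obtain ⟨φσ, hφσ⟩ := hresid σ₀ hσ₀S
      obtain ⟨φτ, hφτ⟩ := hresid τ hτS
      have heq : φτ = φσ := invol_unique h2F φτ φσ (hinvol τ φτ hφτ) (hinvol σ₀ φσ hφσ)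
        (hnontriv τ φτ hφτ hτ) (hnontriv σ₀ φσ hφσ hσ₀)
      apply hsep τ σ₀
      intro x
      rw [← hφτ x, heq, hφσ x]
    have hsub : {σ : K ≃ₐ[ℚ] K | Ideal.map (RingOfIntegers.mapRingHom (σ : K ≃ₐ[ℚ] K)) 𝔓 = 𝔓}
        ⊆ {1, σ₀} := by
      intro τ hτ
      by_cases h : τ = 1
      · exact Or.inl h
      · exact Or.inr (key τ hτ h)
    calc Nat.card {σ : K ≃ₐ[ℚ] K |
        Ideal.map (RingOfIntegers.mapRingHom (σ : K ≃ₐ[ℚ] K)) 𝔓 = 𝔓}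
        = ({σ : K ≃ₐ[ℚ] K |
          Ideal.map (RingOfIntegers.mapRingHom (σ : K ≃ₐ[ℚ] K)) 𝔓 = 𝔓} : Set _).ncard :=
          Nat.card_coe_set_eq _
      _ ≤ ({1, σ₀} : Set (K ≃ₐ[ℚ] K)).ncard := Set.ncard_le_ncard hsub (Set.toFinite _)
      _ ≤ ({σ₀} : Set (K ≃ₐ[ℚ] K)).ncard + 1 := Set.ncard_insert_le _ _
      _ ≤ 2 := by rw [Set.ncard_singleton]
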